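/- If f : ℝ → ℝ is continuous and has a periodic orbit of period m+n of type L(m,n) with m,n ≥ 2, then for all integers m' ≥ m and n' ≥ n, f has a periodic orbit of period m'+n' of type L(m',n'). -/

import Mathlib

open Set

private lemma shrink_mono {g : ℝ → ℝ} (hg : Continuous g) {x1 x2 c d : ℝ}
    (h12 : x1 ≤ x2) (hc : g x1 = c) (hd : g x2 = d) (hcd : c ≤ d) :
    ∃ p q, x1 ≤ p ∧ p ≤ q ∧ q ≤ x2 ∧ g '' Icc p q = Icc c d := by
  set S : Set ℝ := Icc x1 x2 ∩ g ⁻¹' {c} with hS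
  have hScl : IsClosed S := isClosed_Icc.inter (isClosed_singleton.preimage hg)
  have hSne : S.Nonempty := ⟨x1, ⟨le_rfl, h12⟩, hc⟩
  have hSbdd : BddAbove S := ⟨x2, fun x hx => hx.1.2⟩
  have hpS : sSup S ∈ S := hScl.csSup_mem hSne hSbdd
  set p := sSup S with hp
  have hp1 : x1 ≤ p := hpS.1.1
  have hp2 : p ≤ x2 := hpS.1.2
  have hgp : g p = c := hpS.2
  set T : Set ℝ := Icc p x2 ∩ g ⁻¹' {d} with hT
  have hTcl : IsClosed T := isClosed_Icc.inter (isClosed_singleton.preimage hg)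
  have hTne : T.Nonempty := ⟨x2, ⟨hp2, le_rfl⟩, hd⟩
  have hTbdd : BddBelow T := ⟨p, fun x hx => hx.1.1⟩
  have hqT : sInf T ∈ T := hTcl.csInf_mem hTne hTbdd
  set q := sInf T with hq
  have hq1 : p ≤ q := hqT.1.1
  have hq2 : q ≤ x2 := hqT.1.2
  have hgq : g q = d := hqT.2
  refine ⟨p, q, hp1, hq1, hq2, ?_⟩
  apply Subset.antisymm
  · rintro v ⟨x, hx, rfl⟩
    constructor
    · by_contra hlt
      push_neg at hlt
      -- g x < c; find x' ∈ [x, q] with g x' = c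
      have : c ∈ Icc (g x) (g q) := ⟨hlt.le, hgq ▸ hcd⟩
      obtain ⟨x', hx', hgx'⟩ := intermediate_value_Icc hx.2 hg.continuousOn this
      have hx'S : x' ∈ S := ⟨⟨le_trans hp1 (le_trans hx.1 hx'.1), le_trans hx'.2 hq2⟩, hgx'⟩
      have : x' ≤ p := le_csSup hSbdd hx'S
      have hxp : x = p := le_antisymm (hx'.1.trans this) hx.1
      rw [hxp, hgp] at hlt; exact lt_irrefl _ hlt
    · by_contra hlt
      push_neg at hlt
      -- g x > d; find x' ∈ [p, x] with g x' = d
      have : d ∈ Icc (g p) (g x) := ⟨hgp ▸ hcd, hlt.le⟩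
      obtain ⟨x', hx', hgx'⟩ := intermediate_value_Icc hx.1 hg.continuousOn this
      have hx'T : x' ∈ T := ⟨⟨hx'.1, le_trans (hx'.2.trans hx.2) hq2⟩, hgx'⟩
      have hqx' : q ≤ x' := csInf_le hTbdd hx'T
      have hxq : x = q := le_antisymm hx.2 (hqx'.trans hx'.2)
      rw [hxq, hgq] at hlt; exact lt_irrefl _ hlt
  · have := intermediate_value_Icc hq1 hg.continuousOn
    rw [hgp, hgq] at this
    exact this


lemma covering {f : ℝ → ℝ} (hf : Continuous f) {a b c d : ℝ} (hab : a ≤ b) (hcd : c ≤ d)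
    (h : Icc c d ⊆ f '' Icc a b) :
    ∃ p q, a ≤ p ∧ p ≤ q ∧ q ≤ b ∧ f '' Icc p q = Icc c d := by
  obtain ⟨x1, hx1, hfx1⟩ := h (left_mem_Icc.2 hcd)
  obtain ⟨x2, hx2, hfx2⟩ := h (right_mem_Icc.2 hcd)
  rcases le_total x1 x2 with h12 | h21
  · obtain ⟨p, q, h1, h2, h3, h4⟩ := shrink_mono hf h12 hfx1 hfx2 hcd
    exact ⟨p, q, hx1.1.trans h1, h2, h3.trans hx2.2, h4⟩
  · -- apply shrink_mono to x ↦ f (-x)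
    have hg : Continuous (fun x => f (-x)) := hf.comp continuous_neg
    have h12 : -x1 ≤ -x2 := neg_le_neg h21
    obtain ⟨p, q, h1, h2, h3, h4⟩ := shrink_mono hg h12 (by simpa using hfx1)
      (by simpa using hfx2) hcd
    refine ⟨-q, -p, ?_, neg_le_neg h2, ?_, ?_⟩
    · exact le_trans hx2.1 (by linarith)
    · linarith [hx1.2]
    · rw [← h4]
      ext v
      simp only [mem_image]
      constructor <;> rintro ⟨x, hx, rfl⟩ <;>
        exact ⟨-x, ⟨by linarith [hx.1, hx.2], by linarith [hx.1, hx.2]⟩, by simp⟩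

lemma loop_orbit {f : ℝ → ℝ} (hf : Continuous f) (K : ℕ) (hK : 0 < K) (A B : ℕ → ℝ)
    (hAB : ∀ i < K, A i ≤ B i)
    (hcov : ∀ i < K, Icc (A ((i + 1) % K)) (B ((i + 1) % K)) ⊆ f '' Icc (A i) (B i)) :
    ∃ y, f^[K] y = y ∧ ∀ i < K, f^[i] y ∈ Icc (A i) (B i) := by
  have key : ∀ i, ∃ pq : ℝ × ℝ, pq.1 ≤ pq.2 ∧
      (∀ j ≤ i, f^[j] '' Icc pq.1 pq.2 ⊆ Icc (A (j % K)) (B (j % K))) ∧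
      f^[i] '' Icc pq.1 pq.2 = Icc (A (i % K)) (B (i % K)) := by
    intro i
    induction i with
    | zero =>
      refine ⟨(A 0, B 0), hAB 0 hK, ?_, ?_⟩
      · intro j hj
        interval_cases j
        simp [Nat.zero_mod]
      · simp [Nat.zero_mod]
    | succ i ih =>
      obtain ⟨⟨p, q⟩, hpq, hsub, heq⟩ := ih
      have hmod : (i % K + 1) % K = (i + 1) % K := by
        conv_rhs => rw [← Nat.mod_add_mod]
      have hcov' := hcov (i % K) (Nat.mod_lt _ hK)
      rw [hmod] at hcov'
      have himg : Icc (A ((i + 1) % K)) (B ((i + 1) % K)) ⊆ f^[i + 1] '' Icc p q := by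
        rw [Function.iterate_succ', Set.image_comp, heq]
        exact hcov'
      obtain ⟨p', q', h1, h2, h3, h4⟩ := covering (hf.iterate (i + 1)) hpq
        (hAB ((i + 1) % K) (Nat.mod_lt _ hK)) himg
      refine ⟨(p', q'), h2, ?_, h4⟩
      intro j hj
      rcases Nat.lt_or_ge j (i + 1) with hj' | hj'
      · exact (Set.image_mono (Icc_subset_Icc h1 h3)).trans (hsub j (by omega))
      · have : j = i + 1 := by omega
        subst this
        rw [h4]
  obtain ⟨⟨p, q⟩, hpq, hsub, heq⟩ := key K
  rw [Nat.mod_self] at heq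
  have hsub0 : Icc p q ⊆ Icc (A 0) (B 0) := by
    have := hsub 0 (Nat.zero_le K)
    simpa using this
  -- find fixed point of f^[K] in Icc p q
  have hA0 : A 0 ∈ f^[K] '' Icc p q := by rw [heq]; exact left_mem_Icc.2 (hAB 0 hK)
  have hB0 : B 0 ∈ f^[K] '' Icc p q := by rw [heq]; exact right_mem_Icc.2 (hAB 0 hK)
  obtain ⟨u, hu, hfu⟩ := hA0
  obtain ⟨v, hv, hfv⟩ := hB0
  have hcont : Continuous (fun x => f^[K] x - x) := (hf.iterate K).sub continuous_id
  have hu' : f^[K] u - u ≤ 0 := by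
    have := (hsub0 hu).1; rw [hfu]; linarith
  have hv' : 0 ≤ f^[K] v - v := by
    have := (hsub0 hv).2; rw [hfv]; linarith
  have h0 : (0 : ℝ) ∈ Icc (f^[K] u - u) (f^[K] v - v) := ⟨hu', hv'⟩
  obtain ⟨y, hy, hfy⟩ := intermediate_value_uIcc (hcont.continuousOn (s := uIcc u v))
    (by rw [mem_uIcc]; left; exact h0)
  have hyIcc : y ∈ Icc p q := by
    rcases le_total u v with huv | huv
    · rw [uIcc_of_le huv] at hy
      exact ⟨hu.1.trans hy.1, hy.2.trans hv.2⟩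
    · rw [uIcc_of_ge huv] at hy
      exact ⟨hv.1.trans hy.1, hy.2.trans hu.2⟩
  refine ⟨y, by linarith [sub_eq_zero.mp hfy] , ?_⟩
  · intro i hi
    have := hsub i (le_of_lt hi) (Set.mem_image_of_mem _ hyIcc)
    rwa [Nat.mod_eq_of_lt hi] at this



lemma chain {f : ℝ → ℝ} (hf : Continuous f) {z a : ℝ} (hz : f z = z) (hza : z < a)
    (hfa : a < f a) :
    ∃ s : ℕ → ℝ, s 0 = a ∧ (∀ k, z < s k) ∧ (∀ k, s (k + 1) < s k) ∧
      (∀ k, f (s (k + 1)) = s k) := by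
  have step : ∀ w : {w : ℝ // z < w ∧ w < f w},
      ∃ w' : {w : ℝ // z < w ∧ w < f w}, w'.1 < w.1 ∧ f w'.1 = w.1 := by
    rintro ⟨w, hzw, hwf⟩
    have : w ∈ Icc (f z) (f w) := ⟨by rw [hz]; exact hzw.le, hwf.le⟩
    obtain ⟨x, hx, hfx⟩ := intermediate_value_Icc hzw.le hf.continuousOn this
    have hxz : z < x := by
      rcases eq_or_lt_of_le hx.1 with h | h
      · exfalso; rw [← h, hz] at hfx; exact absurd hfx (ne_of_lt hzw)
      · exact h
    have hxw : x < w := by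
      rcases eq_or_lt_of_le hx.2 with h | h
      · exfalso; rw [h] at hfx; exact absurd hfx.symm (ne_of_lt hwf)
      · exact h
    exact ⟨⟨x, hxz, hfx ▸ hxw⟩, hxw, hfx⟩
  choose g hg1 hg2 using step
  set s : ℕ → {w : ℝ // z < w ∧ w < f w} := fun k => g^[k] ⟨a, hza, hfa⟩ with hs
  have hstep : ∀ k, s (k + 1) = g (s k) := by
    intro k
    simp only [hs, Function.iterate_succ_apply']
  refine ⟨fun k => (s k).1, by simp [hs], fun k => (s k).2.1, fun k => ?_, fun k => ?_⟩
  · show (s (k + 1)).1 < (s k).1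
    rw [hstep k]; exact hg1 (s k)
  · show f (s (k + 1)).1 = (s k).1
    rw [hstep k]; exact hg2 (s k)

-- monotone-from-consecutive helpers
lemma mono_succ {x : ℕ → ℝ} {n : ℕ} (h : ∀ i, i + 1 < n → x i < x (i + 1)) :
    ∀ i j, i < j → j < n → x i < x j := by
  intro i j hij hj
  induction j with
  | zero => omega
  | succ j ih =>
    rcases Nat.lt_or_ge i j with h' | h'
    · exact (ih h' (by omega)).trans (h j (by omega))
    · have : i = j := by omega
      subst this
      exact h i (by omega)

lemma anti_succ {x : ℕ → ℝ} {n N : ℕ} (h : ∀ i, n ≤ i → i + 1 < N → x (i + 1) < x i) :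
    ∀ i j, n ≤ i → i < j → j < N → x j < x i := by
  intro i j hni hij hj
  induction j with
  | zero => omega
  | succ j ih =>
    rcases Nat.lt_or_ge i j with h' | h'
    · exact (h j (by omega) (by omega)).trans (ih h' (by omega))
    · have : i = j := by omega
      subst this
      exact h i hni (by omega)


lemma anti_all {x : ℕ → ℝ} (h : ∀ k, x (k + 1) < x k) : ∀ k l, k ≤ l → x l ≤ x k := by
  intro k l hkl
  induction l with
  | zero =>
    have hk0 : k = 0 := by omega
    subst hk0
    exact le_rfl
  | succ l ih =>
    rcases Nat.lt_or_ge k (l + 1) with h' | h'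
    · exact (h l).le.trans (ih (by omega))
    · have : k = l + 1 := by omega
      subst this; exact le_rfl

lemma mono_all {x : ℕ → ℝ} (h : ∀ k, x k < x (k + 1)) : ∀ k l, k ≤ l → x k ≤ x l := by
  intro k l hkl
  induction l with
  | zero =>
    have hk0 : k = 0 := by omega
    subst hk0
    exact le_rfl
  | succ l ih =>
    rcases Nat.lt_or_ge k (l + 1) with h' | h'
    · exact (ih (by omega)).trans (h l).le
    · have : k = l + 1 := by omega
      subst this; exact le_rfl


/-- `f` has a periodic orbit of period `m + n` of type `L(m,n)` (up to reversal of
all inequalities): distinct points `x 0, …, x (m+n-1)` mapped cyclically by `f`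
with `x (m+n-1) < ⋯ < x (n+1) < x n < x 0 < x 1 < ⋯ < x (n-1)`, or the same with
all inequalities reversed. -/
def LType (f : ℝ → ℝ) (m n : ℕ) : Prop :=
  ∃ x : ℕ → ℝ,
    (∀ i < m + n, f (x i) = x ((i + 1) % (m + n))) ∧
    (∀ i < m + n, ∀ j < m + n, x i = x j → i = j) ∧
    (((∀ i, n ≤ i → i + 1 < m + n → x (i + 1) < x i) ∧ x n < x 0 ∧
        (∀ i, i + 1 < n → x i < x (i + 1))) ∨
     ((∀ i, n ≤ i → i + 1 < m + n → x i < x (i + 1)) ∧ x 0 < x n ∧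
        (∀ i, i + 1 < n → x (i + 1) < x i)))

lemma main_construction {f : ℝ → ℝ} (hf : Continuous f) {m n : ℕ} (hm : 2 ≤ m) (hn : 2 ≤ n)
    (a : ℕ → ℝ)
    (hmap : ∀ i < m + n, f (a i) = a ((i + 1) % (m + n)))
    (hleft : ∀ i, n ≤ i → i + 1 < m + n → a (i + 1) < a i)
    (hmid : a n < a 0)
    (hright : ∀ i, i + 1 < n → a i < a (i + 1))
    (p q : ℕ) :
    LType f (m + q) (n + p) := by
  -- basic facts about the original orbit
  have hfa : ∀ i, i + 1 < m + n → f (a i) = a (i + 1) := by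
    intro i hi
    rw [hmap i (by omega), Nat.mod_eq_of_lt hi]
  have hlast : f (a (m + n - 1)) = a 0 := by
    rw [hmap (m + n - 1) (by omega), Nat.sub_add_cancel (by omega), Nat.mod_self]
  have h01 : a 0 < a 1 := hright 0 (by omega)
  have hn1 : a (n + 1) < a n := hleft n le_rfl (by omega)
  have hfan : f (a n) = a (n + 1) := hfa n (by omega)
  have hfa0 : f (a 0) = a 1 := hfa 0 (by omega)
  have hra : ∀ i j, i ≤ j → j < n → a i ≤ a j := by
    intro i j hij hj
    rcases eq_or_lt_of_le hij with h | h
    · exact le_of_eq (by rw [h])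
    · exact (mono_succ hright i j h hj).le
  have hla : ∀ i j, n ≤ i → i ≤ j → j < m + n → a j ≤ a i := by
    intro i j hni hij hj
    rcases eq_or_lt_of_le hij with h | h
    · exact le_of_eq (by rw [h])
    · exact (anti_succ hleft i j hni h hj).le
  -- fixed point z in (a n, a 0)
  obtain ⟨z, hzIcc, hgz⟩ := intermediate_value_Icc hmid.le
    ((hf.sub continuous_id).continuousOn (s := Icc (a n) (a 0)))
    (show (0:ℝ) ∈ Icc (f (a n) - a n) (f (a 0) - a 0) by
      constructor
      · rw [hfan]; linarith
      · rw [hfa0]; linarith)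
  have hfz : f z = z := by
    have : f z - z = 0 := hgz
    linarith
  have hz_an : a n < z := by
    rcases eq_or_lt_of_le hzIcc.1 with h | h
    · exfalso; rw [← h, hfan] at hfz; linarith
    · exact h
  have hz_a0 : z < a 0 := by
    rcases eq_or_lt_of_le hzIcc.2 with h | h
    · exfalso; rw [h, hfa0] at hfz; linarith
    · exact h
  -- right preimage chain zs
  obtain ⟨zs, hzs1, hzs2, hzs3, hzs4⟩ := chain hf hfz hz_a0 (by rw [hfa0]; exact h01)
  -- left preimage chain ws (via conjugation by negation)
  obtain ⟨t, ht1, ht2, ht3, ht4⟩ := chain (f := fun u => -f (-u))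
    ((hf.comp continuous_neg).neg) (z := -z) (a := -(a n))
    (by simp [hfz]) (by simpa using hz_an)
    (by show -(a n) < -f (-(-(a n))); rw [neg_neg, hfan]; linarith)
  set ws : ℕ → ℝ := fun k => -(t k) with hws
  have hws1 : ws 0 = a n := by simp [hws, ht1]
  have hws2 : ∀ k, ws k < z := by intro k; have := ht2 k; simp only [hws]; linarith
  have hws3 : ∀ k, ws k < ws (k + 1) := by
    intro k; have := ht3 k; simp only [hws]; linarith
  have hws4 : ∀ k, f (ws (k + 1)) = ws k := by
    intro k
    have h4 := ht4 k
    show f (-(t (k + 1))) = -(t k)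
    linarith [h4]
  have hzs_le : ∀ k, zs k ≤ a 0 := by
    intro k
    have := anti_all hzs3 0 k (by omega)
    rwa [hzs1] at this
  have hws_ge : ∀ k, a n ≤ ws k := by
    intro k
    have := mono_all hws3 0 k (by omega)
    rwa [hws1] at this
  have haN1 : a (m + n - 1) ≤ a n := hla n (m + n - 1) le_rfl (by omega) (by omega)
  have ha0n1 : a 0 ≤ a (n - 1) := hra 0 (n - 1) (by omega) (by omega)
  -- the loop of intervals
  set K := m + q + (n + p) with hK
  have hK0 : 0 < K := by omega
  set A : ℕ → ℝ := fun i =>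
    if i ≤ p then zs (p + 1 - i)
    else if i < n + p then a (i - p - 1)
    else if i ≤ n + p + q then ws (n + p + q - i)
    else a (i - (p + q)) with hA
  set B : ℕ → ℝ := fun i =>
    if i ≤ p then zs (p - i)
    else if i < n + p then a (i - p)
    else if i ≤ n + p + q then ws (n + p + q - i + 1)
    else a (i - (p + q + 1)) with hB
  have eA1 : ∀ i, i ≤ p → A i = zs (p + 1 - i) := by
    intro i hi; simp only [hA]; rw [if_pos hi]
  have eA2 : ∀ i, p < i → i < n + p → A i = a (i - p - 1) := by
    intro i h1 h2; simp only [hA]; rw [if_neg (by omega), if_pos h2]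
  have eA3 : ∀ i, n + p ≤ i → i ≤ n + p + q → A i = ws (n + p + q - i) := by
    intro i h1 h2; simp only [hA]; rw [if_neg (by omega), if_neg (by omega), if_pos h2]
  have eA4 : ∀ i, n + p + q < i → A i = a (i - (p + q)) := by
    intro i h1; simp only [hA]
    rw [if_neg (by omega), if_neg (by omega), if_neg (by omega)]
  have eB1 : ∀ i, i ≤ p → B i = zs (p - i) := by
    intro i hi; simp only [hB]; rw [if_pos hi]
  have eB2 : ∀ i, p < i → i < n + p → B i = a (i - p) := by
    intro i h1 h2; simp only [hB]; rw [if_neg (by omega), if_pos h2]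
  have eB3 : ∀ i, n + p ≤ i → i ≤ n + p + q → B i = ws (n + p + q - i + 1) := by
    intro i h1 h2; simp only [hB]; rw [if_neg (by omega), if_neg (by omega), if_pos h2]
  have eB4 : ∀ i, n + p + q < i → B i = a (i - (p + q + 1)) := by
    intro i h1; simp only [hB]
    rw [if_neg (by omega), if_neg (by omega), if_neg (by omega)]
  have hAB : ∀ i < K, A i ≤ B i := by
    intro i hi
    by_cases c1 : i ≤ p
    · rw [eA1 i c1, eB1 i c1, show p + 1 - i = (p - i) + 1 by omega]
      exact (hzs3 (p - i)).le
    · by_cases c2 : i < n + p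
      · rw [eA2 i (by omega) c2, eB2 i (by omega) c2, show i - p = (i - p - 1) + 1 by omega]
        exact (hright (i - p - 1) (by omega)).le
      · by_cases c3 : i ≤ n + p + q
        · rw [eA3 i (by omega) c3, eB3 i (by omega) c3]
          exact (hws3 _).le
        · rw [eA4 i (by omega), eB4 i (by omega),
            show i - (p + q) = (i - (p + q + 1)) + 1 by omega]
          exact (hleft (i - (p + q + 1)) (by omega) (by omega)).le
  have hcov : ∀ i < K, Icc (A ((i + 1) % K)) (B ((i + 1) % K)) ⊆ f '' Icc (A i) (B i) := by
    intro i hi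
    have IVT := intermediate_value_Icc (hAB i hi) (hf.continuousOn (s := Icc (A i) (B i)))
    have IVT' := intermediate_value_Icc' (hAB i hi) (hf.continuousOn (s := Icc (A i) (B i)))
    by_cases c1 : i < p
    · -- inside the right chain
      rw [Nat.mod_eq_of_lt (by omega), eA1 (i+1) (by omega), eB1 (i+1) (by omega)]
      refine subset_trans ?_ IVT
      rw [eA1 i (by omega), eB1 i (by omega),
        show p + 1 - i = (p - i) + 1 by omega, hzs4,
        show p - i = (p - i - 1) + 1 by omega, hzs4,
        show p + 1 - (i + 1) = (p - i - 1) + 1 by omega,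
        show p - (i + 1) = p - i - 1 by omega]
    · by_cases c2 : i = p
      · -- i = p : from [zs 1, a 0] to [a 0, a 1]
        rw [Nat.mod_eq_of_lt (by omega), eA2 (i+1) (by omega) (by omega),
          eB2 (i+1) (by omega) (by omega), show i + 1 - p - 1 = 0 by omega,
          show i + 1 - p = 1 by omega]
        refine subset_trans ?_ IVT
        rw [eA1 i (by omega), eB1 i (by omega),
          show p + 1 - i = 0 + 1 by omega, hzs4, show p - i = 0 by omega, hzs1, hfa0]
      · by_cases c3 : i < n + p - 1
        · -- inside the right part of the orbit
          rw [Nat.mod_eq_of_lt (by omega), eA2 (i+1) (by omega) (by omega),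
            eB2 (i+1) (by omega) (by omega)]
          refine subset_trans ?_ IVT
          rw [eA2 i (by omega) (by omega), eB2 i (by omega) (by omega),
            hfa (i - p - 1) (by omega), hfa (i - p) (by omega),
            show i - p - 1 + 1 = i + 1 - p - 1 by omega,
            show i - p + 1 = i + 1 - p by omega]
        · by_cases c4 : i = n + p - 1
          · -- i = n+p-1 : from [a (n-2), a (n-1)] into [ws q, ws (q+1)] ⊆ [a n, a (n-1)]
            rw [Nat.mod_eq_of_lt (by omega), show i + 1 = n + p by omega,
              eA3 (n+p) le_rfl (by omega), eB3 (n+p) le_rfl (by omega),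
              show n + p + q - (n + p) = q by omega]
            refine subset_trans ?_ IVT'
            rw [eA2 i (by omega) (by omega), eB2 i (by omega) (by omega),
              hfa (i - p - 1) (by omega), hfa (i - p) (by omega),
              show i - p + 1 = n by omega, show i - p - 1 + 1 = n - 1 by omega]
            apply Icc_subset_Icc
            · exact hws_ge q
            · exact ((hws2 (q+1)).le.trans hz_a0.le).trans ha0n1
          · by_cases c5 : i < n + p + q
            · -- inside the left chain
              rw [Nat.mod_eq_of_lt (by omega), eA3 (i+1) (by omega) (by omega),
                eB3 (i+1) (by omega) (by omega)]
              refine subset_trans ?_ IVT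
              rw [eA3 i (by omega) (by omega), eB3 i (by omega) (by omega),
                show n + p + q - i = (n + p + q - i - 1) + 1 by omega, hws4, hws4,
                show n + p + q - (i + 1) = n + p + q - i - 1 by omega]
            · by_cases c6 : i = n + p + q
              · -- i = n+p+q : from [a n, ws 1] to [a (n+1), a n]
                rw [Nat.mod_eq_of_lt (by omega), eA4 (i+1) (by omega), eB4 (i+1) (by omega),
                  show i + 1 - (p + q) = n + 1 by omega,
                  show i + 1 - (p + q + 1) = n by omega]
                refine subset_trans ?_ IVT
                rw [eA3 i (by omega) (by omega), eB3 i (by omega) (by omega),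
                  show n + p + q - i = 0 by omega, hws4, hws1, hfan]
              · by_cases c7 : i + 1 < K
                · -- inside the left part of the orbit
                  rw [Nat.mod_eq_of_lt c7, eA4 (i+1) (by omega), eB4 (i+1) (by omega)]
                  refine subset_trans ?_ IVT
                  rw [eA4 i (by omega), eB4 i (by omega),
                    show i - (p + q) = (i - (p + q + 1)) + 1 by omega,
                    hfa (i - (p + q + 1) + 1) (by omega), hfa (i - (p + q + 1)) (by omega),
                    show i + 1 - (p + q) = i - (p + q + 1) + 1 + 1 by omega,
                    show i + 1 - (p + q + 1) = i - (p + q + 1) + 1 by omega]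
                · -- i = K - 1 : wrap around to [zs (p+1), zs p]
                  rw [show (i + 1) % K = 0 by rw [show i + 1 = K by omega]; exact Nat.mod_self K,
                    eA1 0 (by omega), eB1 0 (by omega), show p + 1 - 0 = p + 1 by omega,
                    show p - 0 = p by omega]
                  refine subset_trans ?_ IVT'
                  rw [eA4 i (by omega), eB4 i (by omega),
                    show i - (p + q) = m + n - 1 by omega, hlast,
                    show i - (p + q + 1) = m + n - 2 by omega, hfa (m + n - 2) (by omega),
                    show m + n - 2 + 1 = m + n - 1 by omega]
                  apply Icc_subset_Icc
                  · exact haN1.trans (hz_an.trans (hzs2 (p+1))).le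
                  · exact hzs_le p
  obtain ⟨y0, hy0, hmem⟩ := loop_orbit hf K hK0 A B hAB hcov
  set x' : ℕ → ℝ := fun i => f^[i % K] y0 with hx'
  have hx'lt : ∀ i, i < K → x' i = f^[i] y0 := by
    intro i hi; simp only [hx', Nat.mod_eq_of_lt hi]
  have hmapx : ∀ i, i < K → f (x' i) = x' ((i + 1) % K) := by
    intro i hi
    rw [hx'lt i hi]
    by_cases h : i + 1 < K
    · rw [Nat.mod_eq_of_lt h, hx'lt (i+1) h, Function.iterate_succ_apply']
    · have hiK : i + 1 = K := by omega
      rw [hiK, Nat.mod_self]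
      show f (f^[i] y0) = f^[0 % K] y0
      rw [Nat.zero_mod, Function.iterate_zero_apply]
      calc f (f^[i] y0) = f^[i + 1] y0 := (Function.iterate_succ_apply' f i y0).symm
        _ = f^[K] y0 := by rw [hiK]
        _ = y0 := hy0
  have hY : ∀ i, i < K → A i ≤ x' i ∧ x' i ≤ B i := by
    intro i hi
    rw [hx'lt i hi]
    exact ⟨(hmem i hi).1, (hmem i hi).2⟩
  -- no point of the new orbit is a fixed point of f
  have fixcontra : ∀ i, i < K → f (x' i) ≠ x' i := by
    intro i hi heq
    rw [hx'lt i hi] at heq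
    have hwfix : ∀ j, f^[j] (f^[i] y0) = f^[i] y0 := fun j => Function.iterate_fixed heq j
    have hy0w : y0 = f^[i] y0 := by
      have h1 : f^[K] y0 = f^[K - i] (f^[i] y0) := by
        rw [← Function.iterate_add_apply]
        congr 1
        omega
      calc y0 = f^[K] y0 := hy0.symm
        _ = f^[K - i] (f^[i] y0) := h1
        _ = f^[i] y0 := hwfix (K - i)
    have hall : ∀ j, j < K → x' j = f^[i] y0 := by
      intro j hj
      rw [hx'lt j hj, hy0w]
      simp only [hwfix]
    have h1 := hY (p + 1) (by omega)
    have h2 := hY (n + p + q + 1) (by omega)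
    rw [hall (p+1) (by omega)] at h1
    rw [hall (n+p+q+1) (by omega)] at h2
    rw [eA2 (p+1) (by omega) (by omega), show p + 1 - p - 1 = 0 by omega] at h1
    rw [eB4 (n+p+q+1) (by omega), show n + p + q + 1 - (p + q + 1) = n by omega] at h2
    have := h1.1
    have := h2.2
    linarith
  -- matching of consecutive interval endpoints
  have hBA_right : ∀ i, i + 1 < n + p → B i = A (i + 1) := by
    intro i hi
    by_cases c1 : i < p
    · rw [eB1 i (by omega), eA1 (i+1) (by omega), show p + 1 - (i+1) = p - i by omega]
    · by_cases c2 : i = p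
      · rw [eB1 i (by omega), eA2 (i+1) (by omega) (by omega), show p - i = 0 by omega,
          hzs1, show i + 1 - p - 1 = 0 by omega]
      · rw [eB2 i (by omega) (by omega), eA2 (i+1) (by omega) (by omega),
          show i + 1 - p - 1 = i - p by omega]
  have hAB_left : ∀ i, n + p ≤ i → i + 1 < K → A i = B (i + 1) := by
    intro i h1 h2
    by_cases c1 : i < n + p + q
    · rw [eA3 i (by omega) (by omega), eB3 (i+1) (by omega) (by omega),
        show n + p + q - (i+1) + 1 = n + p + q - i by omega]
    · by_cases c2 : i = n + p + q
      · rw [eA3 i (by omega) (by omega), eB4 (i+1) (by omega),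
          show n + p + q - i = 0 by omega, hws1, show i + 1 - (p + q + 1) = n by omega]
      · rw [eA4 i (by omega), eB4 (i+1) (by omega),
          show i + 1 - (p + q + 1) = i - (p + q) by omega]
  -- strict ordering of consecutive points
  have hright' : ∀ i, i + 1 < n + p → x' i < x' (i + 1) := by
    intro i hi
    have h1 : x' i ≤ B i := (hY i (by omega)).2
    have h2 : A (i+1) ≤ x' (i+1) := (hY (i+1) (by omega)).1
    rw [hBA_right i hi] at h1
    rcases eq_or_lt_of_le (h1.trans h2) with h | h
    · exfalso
      apply fixcontra i (by omega)
      have hm := hmapx i (by omega)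
      rw [Nat.mod_eq_of_lt (show i + 1 < K by omega)] at hm
      rw [hm]
      exact h.symm
    · exact h
  have hleft' : ∀ i, n + p ≤ i → i + 1 < K → x' (i + 1) < x' i := by
    intro i h1 h2
    have ha : x' (i+1) ≤ B (i+1) := (hY (i+1) (by omega)).2
    have hb : A i ≤ x' i := (hY i (by omega)).1
    rw [← hAB_left i h1 h2] at ha
    rcases eq_or_lt_of_le (ha.trans hb) with h | h
    · exfalso
      apply fixcontra i (by omega)
      have hm := hmapx i (by omega)
      rw [Nat.mod_eq_of_lt (show i + 1 < K by omega)] at hm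
      rw [hm]
      exact h
    · exact h
  -- right points are above z, left points below z
  have hAz : ∀ i, i < n + p → z < x' i := by
    intro i hi
    refine lt_of_lt_of_le ?_ (hY i (by omega)).1
    by_cases c1 : i ≤ p
    · rw [eA1 i c1]; exact hzs2 _
    · rw [eA2 i (by omega) hi]
      exact lt_of_lt_of_le hz_a0 (hra 0 (i - p - 1) (by omega) (by omega))
  have hBz : ∀ i, n + p ≤ i → i < K → x' i < z := by
    intro i h1 h2
    refine lt_of_le_of_lt (hY i h2).2 ?_
    by_cases c1 : i ≤ n + p + q
    · rw [eB3 i h1 c1]; exact hws2 _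
    · rw [eB4 i (by omega)]
      exact lt_of_le_of_lt (hla n (i - (p + q + 1)) le_rfl (by omega) (by omega)) hz_an
  have hmono := mono_succ hright'
  have hanti := anti_succ hleft'
  have hinj : ∀ i, i < K → ∀ j, j < K → x' i = x' j → i = j := by
    have key : ∀ i j, i < j → j < K → x' i ≠ x' j := by
      intro i j hij hj heq
      by_cases c1 : j < n + p
      · exact absurd heq (ne_of_lt (hmono i j hij c1))
      · by_cases c2 : n + p ≤ i
        · exact absurd heq.symm (ne_of_lt (hanti i j c2 hij hj))
        · have hb := hBz j (by omega) hj
          have ha := hAz i (by omega)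
          rw [heq] at ha
          linarith
    intro i hi j hj heq
    rcases Nat.lt_trichotomy i j with h | h | h
    · exact absurd heq (key i j h hj)
    · exact h
    · exact absurd heq.symm (key j i h hi)
  refine ⟨x', ?_, ?_, Or.inl ⟨?_, ?_, ?_⟩⟩
  · intro i hi
    exact hmapx i hi
  · intro i hi j hj heq
    exact hinj i hi j hj heq
  · intro i h1 h2
    exact hleft' i h1 h2
  · have h1 := hBz (n+p) le_rfl (by omega)
    have h2 := hAz 0 (by omega)
    linarith
  · intro i h1
    exact hright' i h1

lemma neg_conj {f : ℝ → ℝ} {M N : ℕ} (h : LType (fun u => -f (-u)) M N) : LType f M N := by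
  obtain ⟨x, h1, h2, h3⟩ := h
  refine ⟨fun i => -(x i), ?_, ?_, ?_⟩
  · intro i hi
    have := h1 i hi
    simp only at this
    show f (-(x i)) = -(x ((i + 1) % (M + N)))
    linarith
  · intro i hi j hj heq
    exact h2 i hi j hj (by linarith [neg_injective heq])
  · rcases h3 with ⟨b1, b2, b3⟩ | ⟨b1, b2, b3⟩
    · exact Or.inr ⟨fun i hi hi2 => neg_lt_neg (b1 i hi hi2), neg_lt_neg b2,
        fun i hi => neg_lt_neg (b3 i hi)⟩
    · exact Or.inl ⟨fun i hi hi2 => neg_lt_neg (b1 i hi hi2), neg_lt_neg b2,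
        fun i hi => neg_lt_neg (b3 i hi)⟩


theorem stmt_18 (f : ℝ → ℝ) (hf : Continuous f) (m n : ℕ) (hm : 2 ≤ m) (hn : 2 ≤ n)
    (h : LType f m n) :
    ∀ m' n', m ≤ m' → n ≤ n' → LType f m' n' := by
  intro m' n' hm' hn'
  obtain ⟨q, rfl⟩ := Nat.exists_eq_add_of_le hm'
  obtain ⟨p, rfl⟩ := Nat.exists_eq_add_of_le hn'
  obtain ⟨x, h1, h2, h3⟩ := h
  rcases h3 with ⟨b1, b2, b3⟩ | ⟨b1, b2, b3⟩
  · exact main_construction hf hm hn x h1 b1 b2 b3 p q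
  · apply neg_conj
    refine main_construction (f := fun u => -f (-u)) ((hf.comp continuous_neg).neg)
      hm hn (fun i => -(x i)) ?_ ?_ ?_ ?_ p q
    · intro i hi
      have := h1 i hi
      show -f (-(-(x i))) = -(x ((i + 1) % (m + n)))
      rw [neg_neg, this]
    · intro i hi hi2
      exact neg_lt_neg (b1 i hi hi2)
    · exact neg_lt_neg b2
    · intro i hi
      exact neg_lt_neg (b3 i hi)
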